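/- Let σ : A* → B* be a non-erasing morphism. For any word p ∈ B* and letter a ∈ A, p is a prefix of the right-infinite word σ(a)^ω if and only if p is a proper prefix of σ(a)p. Moreover, the following are equivalent: (i) p is a prefix of σ(a)^ω for every letter a ∈ A; (ii) p is a prefix of σ(w)p for every w ∈ A*; (iii) there exists N ≥ 0 such that p is a prefix of σ(w) for every w ∈ A* with |w| ≥ N. -/
import Mathlib


open List

variable {A : Type*} {B : Type*} {C : Type*}

/-- `w` is a factor of the bi-infinite word `x`. -/
def IsFactor (x : ℤ → A) (w : List A) : Prop :=
  ∃ i : ℤ, ∀ j : Fin w.length, x (i + (j : ℕ)) = w.get j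

/-- Left extensions `E⁻_x(w)`. -/
def extL (x : ℤ → A) (w : List A) : Set A := {a | IsFactor x (a :: w)}

/-- Right extensions `E⁺_x(w)`. -/
def extR (x : ℤ → A) (w : List A) : Set A := {b | IsFactor x (w ++ [b])}

/-- Bi-extensions `E_x(w)`. -/
def extB (x : ℤ → A) (w : List A) : Set (A × A) :=
  {p | IsFactor x (p.1 :: (w ++ [p.2]))}

/-- The multiplicity `m_x(w)`. -/
noncomputable def mult (x : ℤ → A) (w : List A) : ℤ :=
  ((extB x w).ncard : ℤ) - (extL x w).ncard - (extR x w).ncard + 1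

/-- The extension graph `𝓔_x(w)`: bipartite graph on the disjoint union of
`E⁻_x(w)` and `E⁺_x(w)`, with an edge between left vertex `a` and right vertex `b`
iff `(a, b) ∈ E_x(w)`. -/
def extGraph (x : ℤ → A) (w : List A) :
    SimpleGraph ({a : A // a ∈ extL x w} ⊕ {b : A // b ∈ extR x w}) :=
  SimpleGraph.fromRel fun u v =>
    ∃ (a : {a : A // a ∈ extL x w}) (b : {b : A // b ∈ extR x w}),
      u = Sum.inl a ∧ v = Sum.inr b ∧ (a.1, b.1) ∈ extB x w

/-- The factor complexity `p_x(n)`. -/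
noncomputable def cplx (x : ℤ → A) (n : ℕ) : ℕ :=
  Set.ncard {w : List A | IsFactor x w ∧ w.length = n}

/-- Application of a morphism (given by its values on letters) to a finite word. -/
def appw (σ : A → List B) (w : List A) : List B := (w.map σ).flatten

/-- `y` is the image of the bi-infinite word `x` under the (non-erasing) morphism `σ`,
i.e. `y = ⋯σ(x_{-1})σ(x_0)σ(x_1)⋯`, anchored so that `σ(x_0)` starts at position `0`. -/
def IsImage (σ : A → List B) (x : ℤ → A) (y : ℤ → B) : Prop :=
  ∃ t : ℤ → ℤ, t 0 = 0 ∧ (∀ n : ℤ, t (n + 1) = t n + (σ (x n)).length) ∧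
    ∀ (n : ℤ) (j : Fin (σ (x n)).length), y (t n + (j : ℕ)) = (σ (x n)).get j

/-- The width `‖σ‖` of a morphism. -/
noncomputable def width [Fintype A] (σ : A → List B) : ℕ :=
  Finset.univ.sup fun a => (σ a).length

/-- `p` is a prefix of the right-infinite word `u^ω = uuu⋯`. -/
def PrefOmega (p u : List B) : Prop := ∃ n : ℕ, p <+: (List.replicate n u).flatten

lemma step {B : Type*} {p u q : List B} (h1 : p <+: u ++ p) (h2 : p <+: q) : p <+: u ++ q :=
  h1.trans ((List.prefix_append_right_inj u).2 h2)

lemma rep_pref {B : Type*} {p u : List B} (h1 : p <+: u ++ p) :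
    ∀ n : ℕ, p <+: (List.replicate n u).flatten ++ p := by
  intro n
  induction n with
  | zero => simp
  | succ n ih =>
    rw [List.replicate_succ, List.flatten_cons, List.append_assoc]
    exact step h1 ih

lemma key_iff {B : Type*} {p u : List B} (hu : u ≠ []) :
    PrefOmega p u ↔ p <+: u ++ p := by
  constructor
  · rintro ⟨n, hn⟩
    have h1 : p <+: (List.replicate (n+1) u).flatten := by
      rw [List.replicate_succ', List.flatten_append]
      exact hn.trans (List.prefix_append _ _)
    have h2 : u ++ p <+: (List.replicate (n+1) u).flatten := by
      rw [List.replicate_succ, List.flatten_cons]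
      exact (List.prefix_append_right_inj u).2 hn
    exact List.prefix_of_prefix_length_le h1 h2 (by simp)
  · intro h
    refine ⟨p.length, ?_⟩
    have hlen : p.length ≤ ((List.replicate p.length u).flatten).length := by
      simp only [List.length_flatten, List.map_replicate, List.sum_replicate, smul_eq_mul]
      calc p.length = p.length * 1 := (mul_one _).symm
        _ ≤ p.length * u.length :=
            Nat.mul_le_mul_left _ (Nat.one_le_iff_ne_zero.2 (by simpa using hu))
    exact List.prefix_of_prefix_length_le (rep_pref h p.length)
      (List.prefix_append _ _) (by simpa using hlen)

lemma appw_len {A B : Type*} (σ : A → List B) (hne : ∀ a, σ a ≠ []) :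
    ∀ w : List A, w.length ≤ (appw σ w).length := by
  intro w
  induction w with
  | nil => simp [appw]
  | cons a w ih =>
    simp only [appw, List.map_cons, List.flatten_cons, List.length_append, List.length_cons]
    simp only [appw] at ih
    have : 1 ≤ (σ a).length := Nat.one_le_iff_ne_zero.2 (by simpa using hne a)
    omega

/-- `s` is a suffix of the left-infinite word `^ωu = ⋯uuu`. -/
def SuffOmega (s u : List B) : Prop := ∃ n : ℕ, s <:+ (List.replicate n u).flatten

/-- `p` is the longest common prefix `p_σ` of the right-infinite words `σ(a)^ω`. -/
def IsPSigma (σ : A → List B) (p : List B) : Prop :=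
  (∀ a, PrefOmega p (σ a)) ∧ ∀ q : List B, (∀ a, PrefOmega q (σ a)) → q.length ≤ p.length

/-- `s` is the longest common suffix `s_σ` of the left-infinite words `^ωσ(a)`. -/
def IsSSigma (σ : A → List B) (s : List B) : Prop :=
  (∀ a, SuffOmega s (σ a)) ∧ ∀ q : List B, (∀ a, SuffOmega q (σ a)) → q.length ≤ s.length

theorem stmt10 [Fintype A] [Fintype B] (hA : 2 ≤ Fintype.card A) (hB : 2 ≤ Fintype.card B)
    (σ : A → List B) (hne : ∀ a, σ a ≠ []) (hcov : ∀ b, ∃ a, b ∈ σ a)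
    (p : List B) :
    (∀ a : A, (PrefOmega p (σ a) ↔ (p <+: σ a ++ p ∧ p ≠ σ a ++ p))) ∧
    ((∀ a : A, PrefOmega p (σ a)) ↔ (∀ w : List A, p <+: appw σ w ++ p)) ∧
    ((∀ a : A, PrefOmega p (σ a)) ↔
      (∃ N : ℕ, ∀ w : List A, N ≤ w.length → p <+: appw σ w)) := by
  
  have part2 : (∀ a : A, PrefOmega p (σ a)) ↔ (∀ w : List A, p <+: appw σ w ++ p) := by
    constructor
    · intro h w
      induction w with
      | nil => simp [appw]
      | cons a w ih =>
        have hkey := (key_iff (hne a)).1 (h a)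
        simpa [appw, List.append_assoc] using step hkey ih
    · intro h a
      exact (key_iff (hne a)).2 (by simpa [appw] using h [a])
  refine ⟨fun a => ?_, part2, ?_⟩
  · rw [key_iff (hne a)]
    constructor
    · intro h
      refine ⟨h, fun he => hne a ?_⟩
      have := congrArg List.length he
      simp at this
      exact this
    · exact fun h => h.1
  · constructor
    · intro h
      refine ⟨p.length, fun w hw => ?_⟩
      have h1 := part2.1 h w
      have h2 : p.length ≤ (appw σ w).length := hw.trans (appw_len σ hne w)
      exact List.prefix_of_prefix_length_le h1 (List.prefix_append _ _) (by simpa using h2)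
    · rintro ⟨N, hN⟩ a
      refine ⟨N, ?_⟩
      have := hN (List.replicate N a) (by simp)
      simpa [appw, List.map_replicate] using this
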